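/- Let d ≥ 1, let ψ : ℝ^d → [0,∞) be measurable, let μ be a Borel measure on ℝ^d, and fix b ∈ (0,2) and t > 0. Set w(s,ξ) = s·sinc( s·√(ψ(ξ)) ) for s ≥ 0 and ξ ∈ ℝ^d, and set K(t) = max( (π/t)², 1 ). Then there exists a constant c > 0, depending only on b, such that ∫₀¹ ε^{−1−b} ( ∫₀ᵗ ∫_{ℝ^d} | w(s+ε,ξ) − w(s,ξ) |² μ(dξ) ds ) dε ≥ c·t·∫_{{ξ : ψ(ξ) ≥ 16·K(t)}} ψ(ξ)^{b/2}·(1 + ψ(ξ))^{−1} μ(dξ). -/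

import Mathlib

open MeasureTheory Set Filter
open scoped ENNReal

/-- `sinc x = sin x / x` for `x ≠ 0`, `sinc 0 = 1`. -/
noncomputable def sinc (x : ℝ) : ℝ := if x = 0 then 1 else Real.sin x / x

namespace SwapAux

noncomputable def idx (n : ℕ) (y : ℝ) : ℤ := ⌊y * 2 ^ n⌋

lemma measurable_idx (n : ℕ) : Measurable (idx n) :=
  Int.measurable_floor.comp (measurable_id.mul_const _)

lemma mem_iff {n : ℕ} {j : ℤ} {y : ℝ} :
    idx n y = j ↔ y ∈ Ico ((j : ℝ) * ((2:ℝ) ^ n)⁻¹) ((j + 1) * ((2:ℝ) ^ n)⁻¹) := by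
  have h2 : (0:ℝ) < 2 ^ n := by positivity
  rw [idx, Int.floor_eq_iff]
  constructor
  · rintro ⟨h1, h3⟩
    constructor
    · rw [← div_le_iff₀ h2] at h1; simpa [div_eq_mul_inv] using h1
    · rw [← lt_div_iff₀ h2] at h3; simpa [div_eq_mul_inv] using h3
  · rintro ⟨h1, h3⟩
    constructor
    · rw [← div_le_iff₀ h2]; simpa [div_eq_mul_inv] using h1
    · rw [← lt_div_iff₀ h2]; simpa [div_eq_mul_inv] using h3

lemma dist_lt {n : ℕ} {y z : ℝ} (hz : idx n z = idx n y) : |z - y| < ((2:ℝ) ^ n)⁻¹ := by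
  have h1 := mem_iff.1 hz
  have h2 := mem_iff.1 (rfl : idx n y = idx n y)
  set j : ℤ := idx n y
  have he : ((j:ℝ) + 1) * ((2:ℝ)^n)⁻¹ = (j:ℝ) * ((2:ℝ)^n)⁻¹ + ((2:ℝ)^n)⁻¹ := by ring
  rw [abs_lt]
  obtain ⟨a1, a2⟩ := h1
  obtain ⟨b1, b2⟩ := h2
  rw [he] at a2 b2
  constructor <;> linarith

end SwapAux

open SwapAux in
lemma swap_le {X : Type*} [MeasurableSpace X] (μ : Measure X) (F : X → ℝ → ℝ≥0∞)
    (s : Set ℝ) (hs : MeasurableSet s)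
    (hFc : ∀ x, ∀ y ∈ s, ContinuousAt (F x) y)
    (hFm : ∀ y : ℝ, Measurable fun x => F x y) :
    ∫⁻ x, (∫⁻ y in s, F x y) ∂μ ≤ ∫⁻ y in s, (∫⁻ x, F x y ∂μ) := by
  classical
  -- the discretized infimum
  set c : ℕ → ℤ → X → ℝ≥0∞ := fun n j x => ⨅ (q : ℚ) (_ : idx n (q:ℝ) = j), F x q with hc
  have hcm : ∀ n j, Measurable fun x => c n j x := by
    intro n j
    apply Measurable.iInf
    intro q
    by_cases hq : idx n (q:ℝ) = j
    · simpa [hq] using hFm (q:ℝ)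
    · simp [hq]
  -- c is below F on the cell, for y ∈ s
  have hcle : ∀ n (x : X) (y : ℝ), y ∈ s → c n (idx n y) x ≤ F x y := by
    intro n x y hy
    by_contra hlt
    push_neg at hlt
    have hU : {z : ℝ | F x z < c n (idx n y) x} ∈ nhds y :=
      (hFc x y hy).preimage_mem_nhds (Iio_mem_nhds hlt)
    obtain ⟨ε, hε, hball⟩ := Metric.mem_nhds_iff.1 hU
    have h2 : (0:ℝ) < ((2:ℝ) ^ n)⁻¹ := by positivity
    have hylt : y < (↑(idx n y) + 1) * ((2:ℝ)^n)⁻¹ := (mem_iff.1 rfl).2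
    obtain ⟨q, hq1, hq2⟩ := exists_rat_btwn (lt_min hylt (lt_add_of_pos_right y hε))
    have hqmem : idx n (q:ℝ) = idx n y := by
      rw [mem_iff]
      exact ⟨le_trans (mem_iff.1 (rfl : idx n y = idx n y)).1 hq1.le,
        lt_of_lt_of_le hq2 (min_le_left _ _)⟩
    have hqball : (q:ℝ) ∈ Metric.ball y ε := by
      rw [Metric.mem_ball, Real.dist_eq, abs_lt]
      constructor
      · linarith
      · have := lt_of_lt_of_le hq2 (min_le_right _ _); linarith
    have hqU : F x q < c n (idx n y) x := hball hqball
    have : c n (idx n y) x ≤ F x q := by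
      refine iInf_le_of_le q ?_
      exact iInf_le_of_le hqmem le_rfl
    exact absurd (lt_of_le_of_lt this hqU) (lt_irrefl _)
  -- decomposition of the restricted measure
  set P : ℕ → ℤ → Set ℝ := fun n j => idx n ⁻¹' {j} with hP
  have hPm : ∀ n j, MeasurableSet (P n j) := fun n j =>
    measurable_idx n (measurableSet_singleton j)
  have hres : ∀ n : ℕ, (volume : Measure ℝ).restrict s
      = Measure.sum (fun j : ℤ => volume.restrict (s ∩ P n j)) := by
    intro n
    have hcover : s = ⋃ j : ℤ, s ∩ P n j := by
      ext y
      simp only [mem_iUnion, mem_inter_iff, mem_preimage, mem_singleton_iff]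
      exact ⟨fun hy => ⟨idx n y, hy, rfl⟩, fun ⟨j, hy, _⟩ => hy⟩
    have hdisj : Pairwise (Function.onFun Disjoint fun j : ℤ => s ∩ P n j) := by
      intro i j hij
      rw [Function.onFun, Set.disjoint_left]
      rintro y ⟨-, hyi⟩ ⟨-, hyj⟩
      exact hij ((hyi.symm.trans hyj) ▸ rfl)
    conv_lhs => rw [hcover]
    exact Measure.restrict_iUnion hdisj fun j => (hs.inter (hPm n j))
  -- representation of the discretized inner integral
  have hrepr : ∀ n (x : X), (∫⁻ y in s, c n (idx n y) x ∂volume)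
      = ∑' j : ℤ, c n j x * volume (s ∩ P n j) := by
    intro n x
    rw [hres n, lintegral_sum_measure]
    congr 1
    ext j
    rw [show (∫⁻ y in s ∩ P n j, c n (idx n y) x ∂volume)
        = ∫⁻ _ in s ∩ P n j, c n j x ∂volume from
      setLIntegral_congr_fun (hs.inter (hPm n j))
        (fun y hy => by
          have : idx n y = j := hy.2
          rw [this]),
      setLIntegral_const]
  -- the key per-n estimate
  have hkey : ∀ n : ℕ, (∫⁻ x, ∫⁻ y in s, c n (idx n y) x ∂volume ∂μ)
      ≤ ∫⁻ y in s, (∫⁻ x, F x y ∂μ) ∂volume := by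
    intro n
    calc (∫⁻ x, ∫⁻ y in s, c n (idx n y) x ∂volume ∂μ)
        = ∫⁻ x, ∑' j : ℤ, c n j x * volume (s ∩ P n j) ∂μ := by
          congr 1; ext x; exact hrepr n x
      _ = ∑' j : ℤ, ∫⁻ x, c n j x * volume (s ∩ P n j) ∂μ :=
          lintegral_tsum fun j => ((hcm n j).mul_const _).aemeasurable
      _ = ∑' j : ℤ, (∫⁻ x, c n j x ∂μ) * volume (s ∩ P n j) := by
          congr 1; ext j; exact lintegral_mul_const _ (hcm n j)
      _ ≤ ∑' j : ℤ, ∫⁻ y in s ∩ P n j, (∫⁻ x, F x y ∂μ) ∂volume := by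
          refine ENNReal.tsum_le_tsum fun j => ?_
          have hpt : ∀ y ∈ s ∩ P n j, (∫⁻ x, c n j x ∂μ) ≤ ∫⁻ x, F x y ∂μ := by
            intro y hy
            refine lintegral_mono fun x => ?_
            have hj : idx n y = j := hy.2
            have := hcle n x y hy.1
            rwa [hj] at this
          calc (∫⁻ x, c n j x ∂μ) * volume (s ∩ P n j)
              = ∫⁻ _ in s ∩ P n j, (∫⁻ x, c n j x ∂μ) ∂volume := (setLIntegral_const _ _).symm
            _ ≤ ∫⁻ y in s ∩ P n j, (∫⁻ x, F x y ∂μ) ∂volume := by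
                refine lintegral_mono_ae ?_
                filter_upwards [ae_restrict_mem (hs.inter (hPm n j))] with y hy
                exact hpt y hy
      _ = ∫⁻ y in s, (∫⁻ x, F x y ∂μ) ∂volume := by
          rw [hres n, lintegral_sum_measure]
  -- pointwise liminf bound
  have hliminf : ∀ (x : X) (y : ℝ), y ∈ s →
      F x y ≤ liminf (fun n : ℕ => c n (idx n y) x) atTop := by
    intro x y hy
    refine le_of_forall_lt fun a ha => ?_
    obtain ⟨a', ha1, ha2⟩ := exists_between ha
    have hU : {z : ℝ | a' < F x z} ∈ nhds y :=
      (hFc x y hy).preimage_mem_nhds (Ioi_mem_nhds ha2)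
    obtain ⟨ε, hε, hball⟩ := Metric.mem_nhds_iff.1 hU
    obtain ⟨N, hN⟩ := exists_pow_lt_of_lt_one hε (by norm_num : (1:ℝ)/2 < 1)
    have hev : ∀ n ≥ N, a' ≤ c n (idx n y) x := by
      intro n hn
      refine le_iInf fun q => le_iInf fun hq => ?_
      have hd : |(q:ℝ) - y| < ε := by
        refine lt_of_lt_of_le (lt_of_lt_of_le (dist_lt hq) ?_) hN.le
        rw [one_div, inv_pow]
        exact inv_anti₀ (by positivity) (pow_le_pow_left₀ (by norm_num) (by norm_num) _ |>.trans (pow_le_pow_right₀ (by norm_num) hn))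
      have : (q:ℝ) ∈ Metric.ball y ε := by rwa [Metric.mem_ball, Real.dist_eq]
      exact (hball this).le
    have : a' ≤ liminf (fun n : ℕ => c n (idx n y) x) atTop := by
      refine le_liminf_of_le (by isBoundedDefault) ?_
      filter_upwards [eventually_ge_atTop N] with n hn using hev n hn
    exact lt_of_lt_of_le ha1 this
  -- assemble via Fatou
  calc (∫⁻ x, (∫⁻ y in s, F x y) ∂μ)
      ≤ ∫⁻ x, (∫⁻ y in s, liminf (fun n : ℕ => c n (idx n y) x) atTop) ∂μ := by
        refine lintegral_mono fun x => lintegral_mono_ae ?_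
        filter_upwards [ae_restrict_mem hs] with y hy using hliminf x y hy
    _ ≤ ∫⁻ x, liminf (fun n : ℕ => ∫⁻ y in s, c n (idx n y) x ∂volume) atTop ∂μ := by
        refine lintegral_mono fun x => lintegral_liminf_le fun n => ?_
        exact (measurable_from_top (f := fun j : ℤ => c n j x)).comp (measurable_idx n)
    _ ≤ liminf (fun n : ℕ => ∫⁻ x, ∫⁻ y in s, c n (idx n y) x ∂volume ∂μ) atTop := by
        refine lintegral_liminf_le fun n => ?_
        simp_rw [hrepr n]
        exact Measurable.ennreal_tsum fun j => (hcm n j).mul_const _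
    _ ≤ ∫⁻ y in s, (∫⁻ x, F x y ∂μ) ∂volume := by
        refine liminf_le_of_le (by isBoundedDefault) fun b hb => ?_
        obtain ⟨n, hn⟩ := hb.exists
        exact hn.trans (hkey n)

section Core
open Real

lemma cos_sq_integral_lb (l d t : ℝ) (hl : 0 < l) :
    t / 2 - 1 / l ≤ ∫ s in (0:ℝ)..t, Real.cos (l * s + d) ^ 2 := by
  rw [intervalIntegral.integral_comp_mul_add (fun u => Real.cos u ^ 2) hl.ne' d,
    integral_cos_sq]
  have h1 : Real.cos (l * t + d) * Real.sin (l * t + d) ≥ -1 := by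
    nlinarith [Real.neg_one_le_cos (l*t+d), Real.cos_le_one (l*t+d),
      Real.neg_one_le_sin (l*t+d), Real.sin_le_one (l*t+d)]
  have h2 : Real.cos (l * 0 + d) * Real.sin (l * 0 + d) ≤ 1 := by
    nlinarith [Real.neg_one_le_cos (l*0+d), Real.cos_le_one (l*0+d),
      Real.neg_one_le_sin (l*0+d), Real.sin_le_one (l*0+d)]
  rw [smul_eq_mul]
  have hE : l * t - 2 ≤ Real.cos (l*t+d) * Real.sin (l*t+d) - Real.cos (l*0+d) * Real.sin (l*0+d) + (l*t+d) - (l*0+d) := by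
    nlinarith
  calc t / 2 - 1 / l = l⁻¹ * ((l * t - 2) / 2) := by field_simp
    _ ≤ l⁻¹ * ((Real.cos (l*t+d) * Real.sin (l*t+d) - Real.cos (l*0+d) * Real.sin (l*0+d) + (l*t+d) - (l*0+d)) / 2) := by
        refine mul_le_mul_of_nonneg_left (by linarith) (inv_nonneg.mpr hl.le)

lemma integrand_rewrite (l ε s : ℝ) :
    (Real.sin ((s + ε) * l) / l - Real.sin (s * l) / l) ^ 2
      = 4 * Real.sin (ε * l / 2) ^ 2 / l ^ 2 * Real.cos (l * s + ε * l / 2) ^ 2 := by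
  rcases eq_or_ne l 0 with h | h
  · simp [h]
  · rw [div_sub_div_same, Real.sin_sub_sin]
    have h1 : ((s + ε) * l - s * l) / 2 = ε * l / 2 := by ring
    have h2 : ((s + ε) * l + s * l) / 2 = l * s + ε * l / 2 := by ring
    rw [h1, h2]
    field_simp
    ring

lemma inner_integral_lb (l t ε : ℝ) (hl : 0 < l) (ht : 0 < t) (hlt : 4 * Real.pi ≤ t * l) :
    t * Real.sin (ε * l / 2) ^ 2 / l ^ 2
      ≤ ∫ s in Ioc (0:ℝ) t, (Real.sin ((s + ε) * l) / l - Real.sin (s * l) / l) ^ 2 := by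
  rw [← intervalIntegral.integral_of_le ht.le]
  have hrw : (fun s => (Real.sin ((s + ε) * l) / l - Real.sin (s * l) / l) ^ 2)
      = fun s => 4 * Real.sin (ε * l / 2) ^ 2 / l ^ 2 * Real.cos (l * s + ε * l / 2) ^ 2 :=
    funext fun s => integrand_rewrite l ε s
  calc t * Real.sin (ε * l / 2) ^ 2 / l ^ 2
      = 4 * Real.sin (ε * l / 2) ^ 2 / l ^ 2 * (t / 4) := by ring
    _ ≤ 4 * Real.sin (ε * l / 2) ^ 2 / l ^ 2 * (t / 2 - 1 / l) := by
        refine mul_le_mul_of_nonneg_left ?_ (by positivity)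
        have hpi := Real.pi_gt_three
        have h4 : (4:ℝ) ≤ t * l := by nlinarith
        have h5 : 1 / l ≤ t / 4 := by
          rw [div_le_div_iff₀ hl (by norm_num)]; linarith
        linarith
    _ ≤ 4 * Real.sin (ε * l / 2) ^ 2 / l ^ 2 * ∫ s in (0:ℝ)..t, Real.cos (l * s + ε * l / 2) ^ 2 :=
        mul_le_mul_of_nonneg_left (cos_sq_integral_lb l (ε * l / 2) t hl) (by positivity)
    _ = ∫ s in (0:ℝ)..t, 4 * Real.sin (ε * l / 2) ^ 2 / l ^ 2 * Real.cos (l * s + ε * l / 2) ^ 2 :=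
        (intervalIntegral.integral_const_mul _ _).symm
    _ = ∫ s in (0:ℝ)..t, (Real.sin ((s + ε) * l) / l - Real.sin (s * l) / l) ^ 2 := by
        rw [hrw]

lemma sin_sq_half (x : ℝ) (h1 : Real.pi / 2 ≤ x) (h2 : x ≤ Real.pi) :
    1 / 2 ≤ Real.sin (x / 2) ^ 2 := by
  rw [Real.sin_sq_eq_half_sub]
  have : Real.cos (2 * (x / 2)) ≤ 0 := by
    refine Real.cos_nonpos_of_pi_div_two_le_of_le (by linarith) (by linarith [Real.pi_pos])
  linarith

end Core

lemma core_bound (b t l : ℝ) (hb : 0 < b) (ht : 0 < t) (hl : 4 ≤ l)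
    (hlt : 4 * Real.pi ≤ t * l) :
    ENNReal.ofReal (Real.pi ^ (-b) / 4 * t * (l ^ b / (1 + l ^ 2)))
      ≤ ∫⁻ ε in Ioc (0:ℝ) 1, ENNReal.ofReal (ε ^ (-1 - b)) *
          ENNReal.ofReal (∫ s in Ioc (0:ℝ) t,
            (Real.sin ((s + ε) * l) / l - Real.sin (s * l) / l) ^ 2) := by
  have hl0 : (0:ℝ) < l := by linarith
  have hpi := Real.pi_pos
  have hW : Icc (Real.pi/(2*l)) (Real.pi/l) ⊆ Ioc (0:ℝ) 1 := by
    intro x hx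
    refine ⟨lt_of_lt_of_le (by positivity) hx.1, le_trans hx.2 ?_⟩
    rw [div_le_one hl0]
    linarith [Real.pi_le_four]
  refine le_trans ?_ (lintegral_mono_set hW)
  set C : ℝ≥0∞ := ENNReal.ofReal ((Real.pi/l) ^ (-1-b)) * ENNReal.ofReal (t * (1/2) / l ^ 2)
    with hC
  have hCle : ∀ ε ∈ Icc (Real.pi/(2*l)) (Real.pi/l),
      C ≤ ENNReal.ofReal (ε ^ (-1-b)) * ENNReal.ofReal (∫ s in Ioc (0:ℝ) t,
        (Real.sin ((s + ε) * l) / l - Real.sin (s * l) / l) ^ 2) := by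
    intro ε hε
    have hε0 : 0 < ε := lt_of_lt_of_le (by positivity) hε.1
    refine mul_le_mul' (ENNReal.ofReal_le_ofReal
      (Real.rpow_le_rpow_of_nonpos hε0 hε.2 (by linarith))) (ENNReal.ofReal_le_ofReal ?_)
    refine le_trans ?_ (inner_integral_lb l t ε hl0 ht hlt)
    have hs : 1/2 ≤ Real.sin (ε * l / 2) ^ 2 := by
      refine sin_sq_half _ ?_ ?_
      · have h := hε.1
        rw [div_le_iff₀ (by positivity : (0:ℝ) < 2 * l)] at h
        linarith
      · have h := hε.2
        rw [le_div_iff₀ hl0] at h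
        linarith
    gcongr
  have hvol : volume (Icc (Real.pi/(2*l)) (Real.pi/l)) = ENNReal.ofReal (Real.pi/(2*l)) := by
    rw [Real.volume_Icc]
    congr 1
    field_simp
    ring
  calc ENNReal.ofReal (Real.pi ^ (-b) / 4 * t * (l ^ b / (1 + l ^ 2)))
      ≤ C * ENNReal.ofReal (Real.pi/(2*l)) := by
        rw [hC, ← ENNReal.ofReal_mul (by positivity), ← ENNReal.ofReal_mul (by positivity)]
        refine ENNReal.ofReal_le_ofReal ?_
        have hexp : (-1 - b : ℝ) = -(1+b) := by ring
        have h2 : (Real.pi/l) ^ (-1-b : ℝ) = Real.pi ^ (-1-b : ℝ) * l ^ (1+b : ℝ) := by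
          rw [Real.div_rpow hpi.le hl0.le, hexp, Real.rpow_neg hl0.le (1+b), div_eq_mul_inv, inv_inv]
        have h3 : Real.pi ^ (-1-b : ℝ) = Real.pi⁻¹ * Real.pi ^ (-b : ℝ) := by
          rw [show (-1 - b : ℝ) = -1 + -b by ring, Real.rpow_add hpi, Real.rpow_neg_one]
        have h4 : l ^ (1+b : ℝ) = l * l ^ (b : ℝ) := by
          rw [Real.rpow_add hl0, Real.rpow_one]
        rw [h2, h3, h4]
        have hXpos : (0:ℝ) < Real.pi ^ (-b : ℝ) := Real.rpow_pos_of_pos hpi _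
        have hYpos : (0:ℝ) < l ^ (b : ℝ) := Real.rpow_pos_of_pos hl0 _
        calc Real.pi ^ (-b:ℝ) / 4 * t * (l ^ (b:ℝ) / (1 + l ^ 2))
            ≤ Real.pi ^ (-b:ℝ) / 4 * t * (l ^ (b:ℝ) / l ^ 2) := by
              gcongr
              · linarith
            _ = Real.pi⁻¹ * Real.pi ^ (-b:ℝ) * (l * l ^ (b:ℝ)) * (t * (1/2) / l ^ 2) *
                (Real.pi/(2*l)) := by
              field_simp
              ring
      _ = C * volume (Icc (Real.pi/(2*l)) (Real.pi/l)) := by rw [hvol]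
      _ = ∫⁻ _ in Icc (Real.pi/(2*l)) (Real.pi/l), C ∂volume := (setLIntegral_const _ _).symm
      _ ≤ ∫⁻ ε in Icc (Real.pi/(2*l)) (Real.pi/l), ENNReal.ofReal (ε ^ (-1 - b)) *
            ENNReal.ofReal (∫ s in Ioc (0:ℝ) t,
              (Real.sin ((s + ε) * l) / l - Real.sin (s * l) / l) ^ 2) ∂volume := by
          refine lintegral_mono_ae ?_
          filter_upwards [ae_restrict_mem measurableSet_Icc] with ε hε using hCle ε hε

lemma wsinc (u L : ℝ) (hL : L ≠ 0) : u * sinc (u * L) = Real.sin (u * L) / L := by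
  rcases eq_or_ne u 0 with h | h
  · simp [h, sinc]
  · rw [sinc, if_neg (mul_ne_zero h hL)]
    field_simp

lemma G_cont (L ε : ℝ) :
    Continuous fun s : ℝ => (Real.sin ((s + ε) * L) / L - Real.sin (s * L) / L) ^ 2 := by
  fun_prop

lemma G_cont_eps (L : ℝ) (s : ℝ) :
    Continuous fun ε : ℝ => (Real.sin ((s + ε) * L) / L - Real.sin (s * L) / L) ^ 2 := by
  fun_prop

lemma G_cont' (L t : ℝ) :
    Continuous fun ε : ℝ =>
      ∫ s in Ioc (0:ℝ) t, (Real.sin ((s + ε) * L) / L - Real.sin (s * L) / L) ^ 2 := by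
  rcases eq_or_ne L 0 with h | h
  · simp only [h, mul_zero, Real.sin_zero, zero_div, div_zero, sub_zero, sub_self]
    exact continuous_const
  · refine continuous_of_dominated (bound := fun _ => (2 / |L|) ^ 2)
      (fun ε => (G_cont L ε).aestronglyMeasurable) (fun ε => ?_)
      (integrableOn_const measure_Ioc_lt_top.ne)
      (Filter.Eventually.of_forall fun s => G_cont_eps L s)
    refine Filter.Eventually.of_forall fun s => ?_
    have habs : ∀ x : ℝ, |Real.sin x / L| ≤ 1 / |L| := by
      intro x
      rw [abs_div]
      exact (div_le_div_iff_of_pos_right (abs_pos.mpr h)).mpr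
        (abs_le.mpr ⟨Real.neg_one_le_sin x, Real.sin_le_one x⟩)
    have h1 := habs ((s + ε) * L)
    have h2 := habs (s * L)
    have h3 : |Real.sin ((s + ε) * L) / L - Real.sin (s * L) / L| ≤ 1 / |L| + 1 / |L| :=
      le_trans (abs_sub _ _) (add_le_add h1 h2)
    rw [Real.norm_eq_abs, abs_of_nonneg (sq_nonneg _)]
    calc (Real.sin ((s + ε) * L) / L - Real.sin (s * L) / L) ^ 2
        = |Real.sin ((s + ε) * L) / L - Real.sin (s * L) / L| ^ 2 := (sq_abs _).symm
      _ ≤ (2 / |L|) ^ 2 := by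
          refine pow_le_pow_left₀ (abs_nonneg _) ?_ 2
          calc |Real.sin ((s + ε) * L) / L - Real.sin (s * L) / L|
              ≤ 1 / |L| + 1 / |L| := h3
            _ = 2 / |L| := by ring

lemma G_meas {X : Type*} [MeasurableSpace X] {L : X → ℝ} (hL : Measurable L) (t ε : ℝ) :
    Measurable fun x =>
      ∫ s in Ioc (0:ℝ) t, (Real.sin ((s + ε) * L x) / L x - Real.sin (s * L x) / L x) ^ 2 := by
  have hjm : StronglyMeasurable fun p : X × ℝ =>
      (Real.sin ((p.2 + ε) * L p.1) / L p.1 - Real.sin (p.2 * L p.1) / L p.1) ^ 2 := by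
    apply Measurable.stronglyMeasurable
    have hL1 : Measurable fun p : X × ℝ => L p.1 := hL.comp measurable_fst
    have hs : Measurable fun p : X × ℝ => p.2 := measurable_snd
    exact (((Real.measurable_sin.comp ((hs.add_const ε).mul hL1)).div hL1).sub
      ((Real.measurable_sin.comp (hs.mul hL1)).div hL1)).pow_const 2
  exact hjm.integral_prod_right'.measurable

lemma G_meas_xi {X : Type*} [MeasurableSpace X] {L : X → ℝ} (hL : Measurable L) (ε s : ℝ) :
    Measurable fun x =>
      (Real.sin ((s + ε) * L x) / L x - Real.sin (s * L x) / L x) ^ 2 :=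
  (((Real.measurable_sin.comp (hL.const_mul (s + ε))).div hL).sub
      ((Real.measurable_sin.comp (hL.const_mul s)).div hL)).pow_const 2


/-- Lower bound showing `𝓘̄_H(T) ≤ 2 ind_H` for the wave kernel
`w(s,ξ) = s sinc(s √ψ(ξ))`; the constant `c` depends only on `b ∈ (0,2)`. -/
theorem stmt_17 (b : ℝ) (hb : b ∈ Ioo (0 : ℝ) 2) :
    ∃ c : ℝ, 0 < c ∧
      ∀ (d : ℕ), 1 ≤ d →
      ∀ (ψ : EuclideanSpace ℝ (Fin d) → ℝ)
        (μ : Measure (EuclideanSpace ℝ (Fin d))) (t : ℝ),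
        Measurable ψ → (∀ ξ, 0 ≤ ψ ξ) → 0 < t →
        ENNReal.ofReal (c * t) *
            (∫⁻ ξ in {ξ : EuclideanSpace ℝ (Fin d) |
                16 * max ((Real.pi / t) ^ 2) 1 ≤ ψ ξ},
              ENNReal.ofReal (ψ ξ ^ (b / 2) / (1 + ψ ξ)) ∂μ) ≤
          ∫⁻ ε in Ioc (0 : ℝ) 1, ENNReal.ofReal (ε ^ (-1 - b)) *
            ∫⁻ s in Ioc (0 : ℝ) t,
              ∫⁻ ξ, ENNReal.ofReal
                (((s + ε) * sinc ((s + ε) * Real.sqrt (ψ ξ)) -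
                    s * sinc (s * Real.sqrt (ψ ξ))) ^ 2) ∂μ := by
  obtain ⟨hb0, hb2⟩ := hb
  have hpi := Real.pi_pos
  refine ⟨Real.pi ^ (-b) / 4, by positivity, ?_⟩
  intro d _hd ψ μ t hψ hψ0 ht
  have hψsqrt : Measurable fun ξ => Real.sqrt (ψ ξ) := Real.continuous_sqrt.measurable.comp hψ
  set A : Set (EuclideanSpace ℝ (Fin d)) :=
    {ξ | 16 * max ((Real.pi / t) ^ 2) 1 ≤ ψ ξ} with hAdef
  have hA : MeasurableSet A := measurableSet_le measurable_const hψ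
  have hl4 : ∀ ξ ∈ A, 4 ≤ Real.sqrt (ψ ξ) := by
    intro ξ hξ
    have h1 : (1:ℝ) ≤ max ((Real.pi / t) ^ 2) 1 := le_max_right _ _
    have h16 : (16:ℝ) ≤ ψ ξ := le_trans (by nlinarith) hξ
    exact (Real.le_sqrt (by norm_num) (hψ0 ξ)).mpr (by nlinarith)
  have hlne : ∀ ξ ∈ A, Real.sqrt (ψ ξ) ≠ 0 := fun ξ hξ =>
    ne_of_gt (lt_of_lt_of_le (by norm_num) (hl4 ξ hξ))
  have hlt : ∀ ξ ∈ A, 4 * Real.pi ≤ t * Real.sqrt (ψ ξ) := by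
    intro ξ hξ
    have h1 : (Real.pi / t) ^ 2 ≤ max ((Real.pi / t) ^ 2) 1 := le_max_left _ _
    have hξ' : 16 * max ((Real.pi / t) ^ 2) 1 ≤ ψ ξ := hξ
    have h2 : (4 * (Real.pi / t)) ^ 2 ≤ ψ ξ := by nlinarith
    have h3 : 4 * (Real.pi / t) ≤ Real.sqrt (ψ ξ) :=
      (Real.le_sqrt (by positivity) (hψ0 ξ)).mpr h2
    have h4 := mul_le_mul_of_nonneg_left h3 ht.le
    rwa [show t * (4 * (Real.pi / t)) = 4 * Real.pi by field_simp] at h4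
  have hmeas0 : Measurable fun ξ => ENNReal.ofReal (ψ ξ ^ (b / 2) / (1 + ψ ξ)) :=
    ENNReal.measurable_ofReal.comp
      (((Real.continuous_rpow_const (by linarith : (0:ℝ) ≤ b / 2)).measurable.comp hψ).div
        (measurable_const.add hψ))
  have hct : (0:ℝ) ≤ Real.pi ^ (-b) / 4 * t := by positivity
  calc ENNReal.ofReal (Real.pi ^ (-b) / 4 * t) *
        ∫⁻ ξ in A, ENNReal.ofReal (ψ ξ ^ (b / 2) / (1 + ψ ξ)) ∂μ
      = ∫⁻ ξ in A, ENNReal.ofReal (Real.pi ^ (-b) / 4 * t * (ψ ξ ^ (b / 2) / (1 + ψ ξ))) ∂μ := by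
        rw [← lintegral_const_mul _ hmeas0]
        exact lintegral_congr fun ξ => (ENNReal.ofReal_mul hct).symm
    _ ≤ ∫⁻ ξ in A, (∫⁻ ε in Ioc (0:ℝ) 1, ENNReal.ofReal (ε ^ (-1 - b)) *
          ENNReal.ofReal (∫ s in Ioc (0:ℝ) t,
            (Real.sin ((s + ε) * Real.sqrt (ψ ξ)) / Real.sqrt (ψ ξ) -
              Real.sin (s * Real.sqrt (ψ ξ)) / Real.sqrt (ψ ξ)) ^ 2)) ∂μ := by
        refine lintegral_mono_ae ?_
        filter_upwards [ae_restrict_mem hA] with ξ hξ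
        refine le_trans (le_of_eq (congrArg ENNReal.ofReal ?_))
          (core_bound b t (Real.sqrt (ψ ξ)) hb0 ht (hl4 ξ hξ) (hlt ξ hξ))
        have hψlb : ψ ξ ^ (b / 2) = Real.sqrt (ψ ξ) ^ (b : ℝ) := by
          rw [show (b / 2) = 1 / 2 * b by ring, Real.rpow_mul (hψ0 ξ), ← Real.sqrt_eq_rpow]
        rw [hψlb, Real.sq_sqrt (hψ0 ξ)]
    _ ≤ ∫⁻ ε in Ioc (0:ℝ) 1, (∫⁻ ξ in A, ENNReal.ofReal (ε ^ (-1 - b)) *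
          ENNReal.ofReal (∫ s in Ioc (0:ℝ) t,
            (Real.sin ((s + ε) * Real.sqrt (ψ ξ)) / Real.sqrt (ψ ξ) -
              Real.sin (s * Real.sqrt (ψ ξ)) / Real.sqrt (ψ ξ)) ^ 2) ∂μ) ∂volume := by
        refine swap_le (μ.restrict A) _ (Ioc (0:ℝ) 1) measurableSet_Ioc ?_ ?_
        · intro ξ ε hε
          exact ENNReal.Tendsto.mul
            (ENNReal.continuous_ofReal.continuousAt.comp
              (Real.continuousAt_rpow_const ε _ (Or.inl (ne_of_gt hε.1))))
            (Or.inr ENNReal.ofReal_ne_top)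
            ((ENNReal.continuous_ofReal.comp (G_cont' (Real.sqrt (ψ ξ)) t)).continuousAt)
            (Or.inr ENNReal.ofReal_ne_top)
        · intro ε
          exact measurable_const.mul (ENNReal.measurable_ofReal.comp (G_meas hψsqrt t ε))
    _ ≤ ∫⁻ ε in Ioc (0 : ℝ) 1, ENNReal.ofReal (ε ^ (-1 - b)) *
            ∫⁻ s in Ioc (0 : ℝ) t,
              ∫⁻ ξ, ENNReal.ofReal
                (((s + ε) * sinc ((s + ε) * Real.sqrt (ψ ξ)) -
                    s * sinc (s * Real.sqrt (ψ ξ))) ^ 2) ∂μ := by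
        refine lintegral_mono fun ε => ?_
        rw [lintegral_const_mul _ (G_meas hψsqrt t ε).ennreal_ofReal]
        refine mul_le_mul_right ?_ _
        calc (∫⁻ ξ in A, ENNReal.ofReal (∫ s in Ioc (0:ℝ) t,
                (Real.sin ((s + ε) * Real.sqrt (ψ ξ)) / Real.sqrt (ψ ξ) -
                  Real.sin (s * Real.sqrt (ψ ξ)) / Real.sqrt (ψ ξ)) ^ 2) ∂μ)
            = ∫⁻ ξ in A, (∫⁻ s in Ioc (0:ℝ) t, ENNReal.ofReal
                ((Real.sin ((s + ε) * Real.sqrt (ψ ξ)) / Real.sqrt (ψ ξ) -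
                  Real.sin (s * Real.sqrt (ψ ξ)) / Real.sqrt (ψ ξ)) ^ 2)) ∂μ :=
              lintegral_congr fun ξ => ofReal_integral_eq_lintegral_ofReal
                ((G_cont _ ε).integrableOn_Ioc)
                (Filter.Eventually.of_forall fun s => sq_nonneg _)
          _ ≤ ∫⁻ s in Ioc (0:ℝ) t, (∫⁻ ξ in A, ENNReal.ofReal
                ((Real.sin ((s + ε) * Real.sqrt (ψ ξ)) / Real.sqrt (ψ ξ) -
                  Real.sin (s * Real.sqrt (ψ ξ)) / Real.sqrt (ψ ξ)) ^ 2) ∂μ) ∂volume :=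
              swap_le (μ.restrict A) _ (Ioc (0:ℝ) t) measurableSet_Ioc
                (fun ξ s _ => (ENNReal.continuous_ofReal.comp
                  (G_cont (Real.sqrt (ψ ξ)) ε)).continuousAt)
                (fun s => ENNReal.measurable_ofReal.comp (G_meas_xi hψsqrt ε s))
          _ ≤ ∫⁻ s in Ioc (0:ℝ) t, (∫⁻ ξ, ENNReal.ofReal
                (((s + ε) * sinc ((s + ε) * Real.sqrt (ψ ξ)) -
                    s * sinc (s * Real.sqrt (ψ ξ))) ^ 2) ∂μ) ∂volume := by
              refine lintegral_mono fun s => ?_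
              calc (∫⁻ ξ in A, ENNReal.ofReal
                    ((Real.sin ((s + ε) * Real.sqrt (ψ ξ)) / Real.sqrt (ψ ξ) -
                      Real.sin (s * Real.sqrt (ψ ξ)) / Real.sqrt (ψ ξ)) ^ 2) ∂μ)
                  = ∫⁻ ξ in A, ENNReal.ofReal
                    (((s + ε) * sinc ((s + ε) * Real.sqrt (ψ ξ)) -
                        s * sinc (s * Real.sqrt (ψ ξ))) ^ 2) ∂μ := by
                    refine setLIntegral_congr_fun hA
                      (fun ξ hξ => ?_)
                    rw [wsinc (s + ε) _ (hlne ξ hξ), wsinc s _ (hlne ξ hξ)]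
                _ ≤ ∫⁻ ξ, ENNReal.ofReal
                    (((s + ε) * sinc ((s + ε) * Real.sqrt (ψ ξ)) -
                        s * sinc (s * Real.sqrt (ψ ξ))) ^ 2) ∂μ :=
                    setLIntegral_le_lintegral _ _
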